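/- Let D be a finite set with |D| = n ≥ 1, let m ≥ 1, let p(n) be the number of integer partitions of n, and let g_1, …, g_{p(n)} ∈ Sym(D) have pairwise distinct cycle types realizing all cycle types in Sym(D). For each r let k_{r1}, …, k_{rℓ_r} be the cycle type of g_r, and let C_{g_r} be the set of permutations in Sym(D) with the same cycle type as g_r. Then the number of m-uniform endomorphisms on D⁺, up to combinatorial equivalence, equals (1/n!) · Σ_{r=1}^{p(n)} |C_{g_r}| · ∏_{i=1}^{ℓ_r} ( Σ_{j | k_{ri}} j·c(g_r, j) )^m. -/

import Mathlib

/-- The cycle type of a permutation of a finite set, *including* fixed points as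
cycles of length `1`. -/
def fullCycleType {D : Type*} [Fintype D] [DecidableEq D] (g : Equiv.Perm D) : Multiset ℕ :=
  g.cycleType + Multiset.replicate (Fintype.card D - g.support.card) 1

/-- The number of cycles of length `j` in the cycle decomposition of `g`
(fixed points counted as cycles of length `1`). -/
def cycleCount {D : Type*} [Fintype D] [DecidableEq D] (g : Equiv.Perm D) (j : ℕ) : ℕ :=
  Multiset.count j (fullCycleType g)

set_option linter.unusedSectionVars false
namespace UE
open scoped Classical
open scoped Classical

open Function MulAction Equiv FreeSemigroup Finset

/-! ### Words and lists -/

def toL {α : Type*} (w : FreeSemigroup α) : List α := w.head :: w.tail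

@[simp] lemma toL_of {α : Type*} (a : α) : toL (of a) = [a] := rfl

@[simp] lemma toL_mul {α : Type*} (x y : FreeSemigroup α) : toL (x * y) = toL x ++ toL y := rfl

lemma toL_injective {α : Type*} : Function.Injective (toL (α := α)) := by
  rintro ⟨a, l⟩ ⟨b, l'⟩ h
  simpa [toL] using h

@[simp] lemma length_toL {α : Type*} (w : FreeSemigroup α) : (toL w).length = w.length := by
  simp [toL, FreeSemigroup.length]

lemma toL_map {α β : Type*} (f : α → β) (w : FreeSemigroup α) :
    toL (FreeSemigroup.map f w) = (toL w).map f := by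
  induction w using FreeSemigroup.recOnMul with
  | ih1 a => simp
  | ih2 x y hx hy => simp [map_mul, hx, hy]

def ofL {α : Type*} : (l : List α) → l ≠ [] → FreeSemigroup α
  | [a], _ => of a
  | a :: b :: t, _ => of a * ofL (b :: t) (List.cons_ne_nil _ _)

@[simp] lemma toL_ofL {α : Type*} : ∀ (l : List α) (h : l ≠ []), toL (ofL l h) = l
  | [a], _ => rfl
  | a :: b :: t, _ => by
      rw [ofL, toL_mul, toL_ofL (b :: t)]; rfl

/-! ### minimal period basics -/

variable {D : Type*} [Fintype D] [DecidableEq D]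

lemma mem_pp (g : Equiv.Perm D) (d : D) : d ∈ periodicPts ⇑g :=
  ⟨orderOf g, orderOf_pos g, by
    rw [IsPeriodicPt, IsFixedPt, Equiv.Perm.iterate_eq_pow, pow_orderOf_eq_one]; rfl⟩

lemma per_pos (g : Equiv.Perm D) (d : D) : 0 < minimalPeriod ⇑g d :=
  minimalPeriod_pos_of_mem_periodicPts (mem_pp g d)

lemma pow_eq_iff {g : Equiv.Perm D} {k : ℕ} {d : D} :
    (g ^ k) d = d ↔ minimalPeriod ⇑g d ∣ k := by
  rw [← isPeriodicPt_iff_minimalPeriod_dvd]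
  simp only [IsPeriodicPt, IsFixedPt, Equiv.Perm.iterate_eq_pow]

lemma zpow_eq_iff {g : Equiv.Perm D} {i : ℤ} {d : D} :
    (g ^ i) d = d ↔ (minimalPeriod ⇑g d : ℤ) ∣ i := by
  have := MulAction.zpow_smul_eq_iff_minimalPeriod_dvd (a := g) (b := d) (n := i)
  simpa [Equiv.Perm.smul_def] using this

lemma pow_zpow_comm (g : Equiv.Perm D) (k : ℕ) (i : ℤ) (d : D) :
    (g ^ k) ((g ^ i) d) = (g ^ i) ((g ^ k) d) := by
  rw [← Equiv.Perm.mul_apply, ← Equiv.Perm.mul_apply, ← zpow_natCast, ← zpow_add, ← zpow_add,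
    add_comm]

lemma per_zpow (g : Equiv.Perm D) (i : ℤ) (d : D) :
    minimalPeriod ⇑g ((g ^ i) d) = minimalPeriod ⇑g d := by
  apply Nat.dvd_antisymm
  · rw [← pow_eq_iff, pow_zpow_comm, pow_eq_iff.mpr dvd_rfl]
  · rw [← pow_eq_iff]
    have h : (g ^ (minimalPeriod ⇑g ((g ^ i) d))) ((g ^ i) d) = (g ^ i) d :=
      pow_eq_iff.mpr dvd_rfl
    rw [pow_zpow_comm] at h
    exact (g ^ i).injective h

lemma perm_apply_inv_self (f : Equiv.Perm D) (x : D) : f (f⁻¹ x) = x := f.apply_symm_apply x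

lemma perm_inv_apply_self (f : Equiv.Perm D) (x : D) : f⁻¹ (f x) = x := f.symm_apply_apply x

/-! ### Orbit quotient -/

variable (g : Equiv.Perm D)

abbrev Q := orbitRel.Quotient (Subgroup.zpowers g) D

noncomputable def pQ (q : Q g) : ℕ := minimalPeriod ⇑g q.out

lemma mem_orbit_iff_zpow {x y : D} :
    y ∈ orbit (Subgroup.zpowers g) x ↔ ∃ i : ℤ, (g ^ i) x = y := by
  constructor
  · rintro ⟨u, rfl⟩
    obtain ⟨i, hi⟩ := Subgroup.mem_zpowers_iff.mp u.2
    exact ⟨i, by rw [hi]; rfl⟩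
  · rintro ⟨i, rfl⟩
    exact ⟨⟨g ^ i, Subgroup.zpow_mem _ (Subgroup.mem_zpowers g) i⟩, rfl⟩

lemma Qmk_eq_iff {x y : D} :
    (Quotient.mk'' x : Q g) = Quotient.mk'' y ↔ ∃ i : ℤ, (g ^ i) y = x := by
  rw [← mem_orbit_iff_zpow]
  constructor
  · intro h
    exact (orbitRel_apply ..).mp (Quotient.exact' h)
  · intro h
    exact Quotient.sound' ((orbitRel_apply ..).mpr h)

lemma Qmk_out (d : D) : ∃ i : ℤ, (g ^ i) ((Quotient.mk'' d : Q g).out) = d := by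
  rw [← Qmk_eq_iff]
  simp [Quotient.out_eq']

lemma per_Qmk_out (d : D) : pQ g (Quotient.mk'' d) = minimalPeriod ⇑g d := by
  obtain ⟨i, hi⟩ := Qmk_out g d
  rw [pQ]
  conv_rhs => rw [← hi, per_zpow]

noncomputable def zexp (d : D) : ℤ := (Qmk_out g d).choose

lemma zexp_spec (d : D) : (g ^ zexp g d) ((Quotient.mk'' d : Q g).out) = d :=
  (Qmk_out g d).choose_spec

lemma card_orbit_finset (x : D) :
    (Finset.univ.filter fun d : D => (Quotient.mk'' d : Q g) = Quotient.mk'' x).card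
      = minimalPeriod ⇑g x := by
  letI : Fintype (orbit (Subgroup.zpowers g) x) := Fintype.ofFinite _
  rw [← Fintype.card_subtype]
  have e : {d : D // (Quotient.mk'' d : Q g) = Quotient.mk'' x} ≃
      orbit (Subgroup.zpowers g) x :=
    Equiv.subtypeEquivRight fun d => by rw [Qmk_eq_iff, ← mem_orbit_iff_zpow]
  rw [Fintype.card_congr e]
  have h := MulAction.minimalPeriod_eq_card (a := g) (b := x)
  have hfun : (fun y : D => g • y) = ⇑g := rfl
  rw [hfun] at h
  exact h.symm

lemma sameCycle_iff_Qmk {x y : D} :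
    g.SameCycle x y ↔ (Quotient.mk'' y : Q g) = Quotient.mk'' x := by
  rw [Qmk_eq_iff]
  exact Iff.rfl

lemma support_cycleOf_card {x : D} (hx : x ∈ g.support) :
    (g.cycleOf x).support.card = minimalPeriod ⇑g x := by
  have h : (g.cycleOf x).support = Finset.univ.filter
      (fun d : D => (Quotient.mk'' d : Q g) = Quotient.mk'' x) := by
    ext y
    simp only [Equiv.Perm.mem_support_cycleOf_iff, Finset.mem_filter, Finset.mem_univ, true_and]
    rw [← sameCycle_iff_Qmk]
    exact ⟨fun h => h.1, fun h => ⟨h, hx⟩⟩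
  rw [h, card_orbit_finset]

lemma count_map_pQ (j : ℕ) :
    Multiset.count j (Finset.univ.val.map (pQ g)) =
      (Finset.univ.filter fun q : Q g => pQ g q = j).card := by
  rw [Multiset.count_map]
  show _ = (Multiset.filter _ Finset.univ.val).card
  congr 1
  apply Multiset.filter_congr
  intro q _
  simp [eq_comm]

lemma count_cycleType (j : ℕ) :
    Multiset.count j g.cycleType =
      (g.cycleFactorsFinset.filter fun c => c.support.card = j).card := by
  rw [Equiv.Perm.cycleType_def, Multiset.count_map]
  show _ = (Multiset.filter _ _).card
  congr 1
  apply Multiset.filter_congr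
  intro c _
  simp [eq_comm]

lemma mem_support_of_pQ {q : Q g} {j : ℕ} (hj : 2 ≤ j) (hq : pQ g q = j) :
    q.out ∈ g.support := by
  rw [Equiv.Perm.mem_support]
  intro hfix
  have h1 : minimalPeriod ⇑g q.out = 1 :=
    Function.minimalPeriod_eq_one_iff_isFixedPt.mpr hfix
  rw [pQ] at hq
  omega

lemma count_pQ_eq_count_cycleType {j : ℕ} (hj : 2 ≤ j) :
    (Finset.univ.filter fun q : Q g => pQ g q = j).card =
      (g.cycleFactorsFinset.filter fun c => c.support.card = j).card := by
  apply Finset.card_bij (fun q _ => g.cycleOf q.out)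
  · intro q hq
    simp only [Finset.mem_filter, Finset.mem_univ, true_and] at hq ⊢
    have hsupp : q.out ∈ g.support := mem_support_of_pQ g hj hq
    refine ⟨Equiv.Perm.cycleOf_mem_cycleFactorsFinset_iff.mpr hsupp, ?_⟩
    rw [support_cycleOf_card g hsupp]
    exact hq
  · intro q hq q' hq' h
    simp only [Finset.mem_filter, Finset.mem_univ, true_and] at hq hq'
    have hs' : q'.out ∈ g.support := mem_support_of_pQ g hj hq'
    have h1 : q'.out ∈ (g.cycleOf q.out).support := by
      rw [h, Equiv.Perm.mem_support_cycleOf_iff]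
      exact ⟨Equiv.Perm.SameCycle.refl _ _, hs'⟩
    have h2 : g.SameCycle q.out q'.out := (Equiv.Perm.mem_support_cycleOf_iff.mp h1).1
    have h3 := (sameCycle_iff_Qmk g).mp h2
    rw [Quotient.out_eq', Quotient.out_eq'] at h3
    exact h3.symm
  · intro c hc
    simp only [Finset.mem_filter] at hc
    obtain ⟨hc1, hc2⟩ := hc
    obtain ⟨a, ha⟩ := Finset.card_pos.mp (by omega : 0 < c.support.card)
    have hag : a ∈ g.support := Equiv.Perm.mem_cycleFactorsFinset_support_le hc1 ha
    have hca : c = g.cycleOf a := Equiv.Perm.cycle_is_cycleOf ha hc1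
    refine ⟨Quotient.mk'' a, ?_, ?_⟩
    · simp only [Finset.mem_filter, Finset.mem_univ, true_and]
      rw [per_Qmk_out, ← support_cycleOf_card g hag, ← hca]
      exact hc2
    · have hsc : g.SameCycle (Quotient.mk'' a : Q g).out a := Qmk_out g a
      rw [hsc.cycleOf_eq, ← hca]

lemma count_pQ_one :
    (Finset.univ.filter fun q : Q g => pQ g q = 1).card =
      Fintype.card D - g.support.card := by
  rw [← Finset.card_compl g.support]
  apply Finset.card_bij (fun q _ => q.out)
  · intro q hq
    simp only [Finset.mem_filter, Finset.mem_univ, true_and] at hq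
    rw [Finset.mem_compl, Equiv.Perm.notMem_support]
    exact Function.minimalPeriod_eq_one_iff_isFixedPt.mp hq
  · intro q _ q' _ h
    rw [← Quotient.out_eq' q, ← Quotient.out_eq' q', h]
  · intro d hd
    rw [Finset.mem_compl, Equiv.Perm.notMem_support] at hd
    refine ⟨Quotient.mk'' d, ?_, ?_⟩
    · simp only [Finset.mem_filter, Finset.mem_univ, true_and]
      rw [per_Qmk_out]
      exact Function.minimalPeriod_eq_one_iff_isFixedPt.mpr hd
    · obtain ⟨i, hi⟩ := Qmk_out g d
      have hout : minimalPeriod ⇑g (Quotient.mk'' d : Q g).out = 1 := by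
        have := per_Qmk_out g d
        rw [pQ] at this
        rw [this]
        exact Function.minimalPeriod_eq_one_iff_isFixedPt.mpr hd
      have : (g ^ i) ((Quotient.mk'' d : Q g).out) = (Quotient.mk'' d : Q g).out := by
        rw [zpow_eq_iff, hout]
        exact one_dvd _
      rw [this] at hi
      exact hi

lemma count_one_cycleType : Multiset.count 1 g.cycleType = 0 :=
  Multiset.count_eq_zero.mpr fun h => by
    have := Equiv.Perm.two_le_of_mem_cycleType h; omega

lemma P2 : Finset.univ.val.map (pQ g) = fullCycleType g := by
  ext j
  rw [count_map_pQ]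
  unfold fullCycleType
  rw [Multiset.count_add, Multiset.count_replicate]
  match j with
  | 0 =>
    have h1 : (Finset.univ.filter fun q : Q g => pQ g q = 0) = ∅ := by
      ext q
      simp only [Finset.mem_filter, Finset.mem_univ, true_and, Finset.notMem_empty, iff_false]
      have := per_pos g q.out
      rw [pQ]
      omega
    rw [h1]
    have h2 : Multiset.count 0 g.cycleType = 0 :=
      Multiset.count_eq_zero.mpr fun h => by
        have := Equiv.Perm.two_le_of_mem_cycleType h; omega
    simp [h2]
  | 1 =>
    rw [count_pQ_one, count_one_cycleType]
    simp
  | (j + 2) =>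
    rw [count_pQ_eq_count_cycleType g (by omega), count_cycleType]
    simp

lemma Nfilter (j : ℕ) :
    (Finset.univ.filter fun d : D => minimalPeriod ⇑g d = j).card = j * cycleCount g j := by
  have hmaps : ∀ d ∈ (Finset.univ.filter fun d : D => minimalPeriod ⇑g d = j),
      (Quotient.mk'' d : Q g) ∈ (Finset.univ.filter fun q : Q g => pQ g q = j) := by
    intro d hd
    simp only [Finset.mem_filter, Finset.mem_univ, true_and] at hd ⊢
    rw [per_Qmk_out]
    exact hd
  rw [Finset.card_eq_sum_card_fiberwise hmaps]
  have hfib : ∀ q ∈ (Finset.univ.filter fun q : Q g => pQ g q = j),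
      ((Finset.univ.filter fun d : D => minimalPeriod ⇑g d = j).filter
        (fun d => (Quotient.mk'' d : Q g) = q)).card = j := by
    intro q hq
    simp only [Finset.mem_filter, Finset.mem_univ, true_and] at hq
    have heq : ((Finset.univ.filter fun d : D => minimalPeriod ⇑g d = j).filter
        (fun d => (Quotient.mk'' d : Q g) = q)) =
        (Finset.univ.filter fun d : D => (Quotient.mk'' d : Q g) = Quotient.mk'' q.out) := by
      ext d
      simp only [Finset.filter_filter, Finset.mem_filter, Finset.mem_univ, true_and,
        Quotient.out_eq']
      constructor
      · rintro ⟨_, h2⟩; exact h2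
      · intro h
        refine ⟨?_, h⟩
        rw [← hq, ← h, per_Qmk_out]
    rw [heq, card_orbit_finset]
    rw [pQ] at hq
    exact hq
  rw [Finset.sum_congr rfl hfib, Finset.sum_const, smul_eq_mul, ← count_map_pQ, P2, mul_comm]
  rfl

lemma pos_of_mem_full {k : ℕ} (hk : k ∈ fullCycleType g) : k ≠ 0 := by
  rcases Multiset.mem_add.mp hk with h | h
  · have := Equiv.Perm.two_le_of_mem_cycleType h; omega
  · rw [Multiset.eq_of_mem_replicate h]; omega

lemma F_eq {k : ℕ} (hk : k ≠ 0) :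
    Nat.card {y : D // (g ^ k) y = y} = ∑ j ∈ k.divisors, j * cycleCount g j := by
  rw [Nat.card_eq_fintype_card, Fintype.card_subtype]
  have h0 : (Finset.univ.filter fun y : D => (g ^ k) y = y) =
      (Finset.univ.filter fun y : D => minimalPeriod ⇑g y ∣ k) := by
    ext y
    simp [pow_eq_iff]
  rw [h0]
  rw [Finset.card_eq_sum_card_fiberwise (f := fun d => minimalPeriod ⇑g d)
    (t := k.divisors) (fun d hd => by
      simp only [Finset.mem_coe, Finset.mem_filter, Finset.mem_univ, true_and] at hd
      exact Nat.mem_divisors.mpr ⟨hd, hk⟩)]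
  apply Finset.sum_congr rfl
  intro j hj
  rw [← Nfilter]
  congr 1
  ext d
  simp only [Finset.filter_filter, Finset.mem_filter, Finset.mem_univ, true_and]
  constructor
  · rintro ⟨_, h⟩; exact h
  · intro h
    exact ⟨h ▸ (Nat.mem_divisors.mp hj).1, h⟩

/-! ### Commuting functions -/

def Fix1 (g : Equiv.Perm D) : Type _ := {f : D → D // ∀ d, f (g d) = g (f d)}

instance (g : Equiv.Perm D) : Finite (Fix1 g) :=
  inferInstanceAs (Finite {f : D → D // ∀ d, f (g d) = g (f d)})

lemma comm_pow {f : D → D} {h : Equiv.Perm D} (hf : ∀ d, f (h d) = h (f d)) (k : ℕ) :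
    ∀ d, f ((h ^ k) d) = (h ^ k) (f d) := by
  induction k with
  | zero => intro d; simp
  | succ k ih =>
    intro d
    rw [pow_succ, Equiv.Perm.mul_apply, ih (h d), hf d, ← Equiv.Perm.mul_apply, ← pow_succ]

lemma comm_inv {f : D → D} {h : Equiv.Perm D} (hf : ∀ d, f (h d) = h (f d)) (d : D) :
    f (h⁻¹ d) = h⁻¹ (f d) := by
  apply h.injective
  rw [← hf, perm_apply_inv_self, perm_apply_inv_self]

lemma comm_zpow {f : D → D} {h : Equiv.Perm D} (hf : ∀ d, f (h d) = h (f d)) (i : ℤ) :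
    ∀ d, f ((h ^ i) d) = (h ^ i) (f d) := by
  obtain ⟨k⟩ | ⟨k⟩ := i
  · intro d
    have := comm_pow hf k d
    simpa using this
  · intro d
    have hinv : h ^ (Int.negSucc k) = h⁻¹ ^ (k + 1) := by
      rw [zpow_negSucc, inv_pow]
    rw [hinv]
    exact comm_pow (comm_inv hf) (k + 1) d

lemma zpow_eq_on {g : Equiv.Perm D} {x y : D} (hy : (g ^ minimalPeriod ⇑g x) y = y)
    {i j : ℤ} (hx : (g ^ i) x = (g ^ j) x) : (g ^ i) y = (g ^ j) y := by
  have h1 : (g ^ (i - j)) x = x := by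
    have h := congrArg (⇑(g ^ (-j))) hx
    rw [← Equiv.Perm.mul_apply, ← Equiv.Perm.mul_apply, ← zpow_add, ← zpow_add] at h
    rw [neg_add_eq_sub] at h
    simpa using h
  have h2 : (minimalPeriod ⇑g x : ℤ) ∣ i - j := zpow_eq_iff.mp h1
  have h3 : (minimalPeriod ⇑g y : ℤ) ∣ i - j :=
    dvd_trans (Int.natCast_dvd_natCast.mpr (pow_eq_iff.mp hy)) h2
  have h4 : (g ^ (i - j)) y = y := zpow_eq_iff.mpr h3
  have h5 := congrArg (⇑(g ^ j)) h4
  rw [← Equiv.Perm.mul_apply, ← zpow_add] at h5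
  rw [add_sub_cancel] at h5
  exact h5

noncomputable def fix1Equiv (g : Equiv.Perm D) :
    Fix1 g ≃ ∀ q : Q g, {y : D // (g ^ pQ g q) y = y} where
  toFun f q := ⟨f.1 q.out, by
    have h1 : (g ^ pQ g q) q.out = q.out := pow_eq_iff.mpr dvd_rfl
    rw [← comm_pow f.2 (pQ g q), h1]⟩
  invFun u := ⟨fun d => (g ^ zexp g d) ((u (Quotient.mk'' d)).1), by
    intro d
    have hq : (Quotient.mk'' (g d) : Q g) = Quotient.mk'' d := by
      rw [Qmk_eq_iff]
      exact ⟨1, by simp⟩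
    have hval : (u (Quotient.mk'' (g d))).1 = (u (Quotient.mk'' d)).1 :=
      congrArg (fun q' => (u q').1) hq
    show (g ^ zexp g (g d)) ((u (Quotient.mk'' (g d))).1) = _
    rw [hval]
    have h2 : g ((g ^ zexp g d) ((u (Quotient.mk'' d)).1)) =
        (g ^ (zexp g d + 1)) ((u (Quotient.mk'' d)).1) := by
      rw [add_comm, zpow_add, zpow_one, Equiv.Perm.mul_apply]
    rw [h2]
    apply zpow_eq_on (x := (Quotient.mk'' d : Q g).out)
    · exact (u (Quotient.mk'' d)).2
    · have e1 : (g ^ zexp g (g d)) ((Quotient.mk'' (g d) : Q g).out) = g d :=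
        zexp_spec g (g d)
      rw [hq] at e1
      have e2 : (g ^ (zexp g d + 1)) ((Quotient.mk'' d : Q g).out) = g d := by
        rw [add_comm, zpow_add, zpow_one, Equiv.Perm.mul_apply, zexp_spec]
      rw [e1, e2]⟩
  left_inv f := by
    apply Subtype.ext
    funext d
    show (g ^ zexp g d) (f.1 (Quotient.mk'' d : Q g).out) = f.1 d
    rw [← comm_zpow f.2 (zexp g d), zexp_spec]
  right_inv u := by
    funext q
    apply Subtype.ext
    show (g ^ zexp g q.out) ((u (Quotient.mk'' q.out)).1) = (u q).1
    have hq : (Quotient.mk'' q.out : Q g) = q := Quotient.out_eq' q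
    have hval : (u (Quotient.mk'' q.out)).1 = (u q).1 := congrArg (fun q' => (u q').1) hq
    rw [hval]
    have h0 : (g ^ zexp g q.out) ((Quotient.mk'' q.out : Q g).out) = q.out :=
      zexp_spec g q.out
    rw [hq] at h0
    have h1 : (g ^ zexp g q.out) q.out = (g ^ (0 : ℤ)) q.out := by simpa using h0
    have := zpow_eq_on (x := q.out) (y := (u q).1) (u q).2 h1
    simpa using this

lemma card_fix1 (g : Equiv.Perm D) :
    Nat.card (Fix1 g) =
      ((fullCycleType g).map fun k => Nat.card {y : D // (g ^ k) y = y}).prod := by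
  rw [Nat.card_congr (fix1Equiv g), Nat.card_pi, Finset.prod_eq_multiset_prod, ← P2 g,
    Multiset.map_map]
  rfl

/-! ### The conjugation action on `D → Fin m → D` -/

def CF (D : Type*) (m : ℕ) : Type _ := D → Fin m → D

instance : Fintype (CF D m) := inferInstanceAs (Fintype (D → Fin m → D))

variable {m : ℕ}

instance : MulAction (Equiv.Perm D) (CF D m) where
  smul e f := fun d i => e (f (e⁻¹ d) i)
  one_smul f := by
    funext d i
    show (1 : Equiv.Perm D) (f ((1 : Equiv.Perm D)⁻¹ d) i) = f d i
    simp
  mul_smul e1 e2 f := by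
    funext d i
    show (e1 * e2) (f ((e1 * e2)⁻¹ d) i) = e1 (e2 (f (e2⁻¹ (e1⁻¹ d)) i))
    simp [Equiv.Perm.mul_apply]

lemma smul_CF_apply (e : Equiv.Perm D) (f : CF D m) (d : D) (i : Fin m) :
    (e • f) d i = e (f (e⁻¹ d) i) := rfl

lemma mem_fixedBy_CF {e : Equiv.Perm D} {f : CF D m} :
    f ∈ fixedBy (CF D m) e ↔ ∀ d i, f (e d) i = e (f d i) := by
  rw [MulAction.mem_fixedBy]
  constructor
  · intro h d i
    have h2 := congrFun (congrFun h (e d)) i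
    rw [smul_CF_apply] at h2
    rw [← h2, perm_inv_apply_self]
  · intro h
    funext d i
    rw [smul_CF_apply, ← h (e⁻¹ d) i, perm_apply_inv_self]

def fixedByEquiv (e : Equiv.Perm D) (m : ℕ) : fixedBy (CF D m) e ≃ (Fin m → Fix1 e) where
  toFun f i := ⟨fun d => f.1 d i, fun d => mem_fixedBy_CF.mp f.2 d i⟩
  invFun u := ⟨fun d i => (u i).1 d, mem_fixedBy_CF.mpr fun d i => (u i).2 d⟩
  left_inv f := by apply Subtype.ext; rfl
  right_inv u := rfl

def Psi (m : ℕ) (M : Multiset ℕ) : ℕ :=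
  (M.map fun k => (∑ j ∈ k.divisors, j * M.count j) ^ m).prod

lemma card_fixedBy_CF (e : Equiv.Perm D) (m : ℕ) :
    Nat.card (fixedBy (CF D m) e) = Psi m (fullCycleType e) := by
  rw [Nat.card_congr (fixedByEquiv e m), Nat.card_fun,
    Nat.card_eq_fintype_card (α := Fin m), Fintype.card_fin, card_fix1]
  unfold Psi
  rw [← Multiset.prod_map_pow]
  congr 1
  apply Multiset.map_congr rfl
  intro k hk
  rw [F_eq e (pos_of_mem_full e hk)]
  rfl

/-! ### Burnside -/

lemma burnside (m : ℕ) :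
    (∑ e : Equiv.Perm D, Psi m (fullCycleType e)) =
      Nat.card (orbitRel.Quotient (Equiv.Perm D) (CF D m)) * (Fintype.card D).factorial := by
  letI : ∀ e : Equiv.Perm D, Fintype (fixedBy (CF D m) e) := fun e => Fintype.ofFinite _
  letI : Fintype (orbitRel.Quotient (Equiv.Perm D) (CF D m)) := Fintype.ofFinite _
  have h := MulAction.sum_card_fixedBy_eq_card_orbits_mul_card_group (Equiv.Perm D) (CF D m)
  rw [Fintype.card_perm] at h
  rw [Nat.card_eq_fintype_card, ← h]
  apply Finset.sum_congr rfl
  intro e _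
  rw [← card_fixedBy_CF e m, Nat.card_eq_fintype_card]

/-! ### Words of length m vs functions -/

variable (D) in
def U (m : ℕ) : Type _ :=
  {φ : FreeSemigroup D →ₙ* FreeSemigroup D // ∀ d : D, (φ (FreeSemigroup.of d)).length = m}

def wordFun (φ : U D m) : CF D m := fun d i =>
  (toL (φ.1 (of d)))[i.1]'(by rw [length_toL, φ.2 d]; exact i.2)

lemma wordFun_list (φ : U D m) (d : D) : List.ofFn (wordFun φ d) = toL (φ.1 (of d)) := by
  apply List.ext_getElem
  · rw [List.length_ofFn, length_toL, φ.2 d]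
  · intro i h1 h2
    rw [List.getElem_ofFn]
    rfl

noncomputable def mainEquiv (hm : 0 < m) : U D m ≃ CF D m where
  toFun := wordFun
  invFun f := ⟨FreeSemigroup.lift (fun d => ofL (List.ofFn (f d)) (by
      apply List.ne_nil_of_length_pos
      rw [List.length_ofFn]
      exact hm)),
    fun d => by rw [FreeSemigroup.lift_of, ← length_toL, toL_ofL, List.length_ofFn]⟩
  left_inv φ := by
    apply Subtype.ext
    apply FreeSemigroup.hom_ext
    funext d
    show FreeSemigroup.lift _ (of d) = φ.1 (of d)
    rw [FreeSemigroup.lift_of]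
    apply toL_injective
    rw [toL_ofL, wordFun_list]
  right_inv f := by
    funext d i
    show (toL ((FreeSemigroup.lift _) (of d)))[i.1]'_ = f d i
    simp only [FreeSemigroup.lift_of, toL_ofL, List.getElem_ofFn, Fin.eta]

lemma hom_rel_iff (φ ψ : U D m) (e : Equiv.Perm D) :
    ψ.1.comp (FreeSemigroup.map ⇑e) = (FreeSemigroup.map ⇑e).comp φ.1 ↔
      ∀ d, ψ.1 (of (e d)) = FreeSemigroup.map ⇑e (φ.1 (of d)) := by
  constructor
  · intro h d
    have h2 := DFunLike.congr_fun h (of d)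
    simpa using h2
  · intro h
    apply FreeSemigroup.hom_ext
    funext d
    simpa using h d

lemma smul_rel_iff (φ ψ : U D m) (e : Equiv.Perm D) :
    (e • wordFun φ = wordFun ψ) ↔
      ∀ d, ψ.1 (of (e d)) = FreeSemigroup.map ⇑e (φ.1 (of d)) := by
  constructor
  · intro h d
    apply toL_injective
    rw [toL_map, ← wordFun_list, ← wordFun_list, List.map_ofFn]
    congr 1
    funext i
    show wordFun ψ (e d) i = e (wordFun φ d i)
    have h5 := congrFun (congrFun h (e d)) i
    rw [smul_CF_apply, perm_inv_apply_self] at h5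
    exact h5.symm
  · intro h
    funext d i
    rw [smul_CF_apply]
    have h1 : ψ.1 (of d) = FreeSemigroup.map ⇑e (φ.1 (of (e⁻¹ d))) := by
      rw [← h (e⁻¹ d), perm_apply_inv_self]
    have h2 : List.ofFn (wordFun ψ d) = List.ofFn (fun i => e (wordFun φ (e⁻¹ d) i)) := by
      rw [wordFun_list, h1, toL_map, ← wordFun_list, List.map_ofFn]
      rfl
    have h3 := congrFun (List.ofFn_inj.mp h2) i
    exact h3.symm

noncomputable def quotEquiv (hm : 0 < m) :
    Quot (fun φ ψ : U D m => ∃ e : Equiv.Perm D,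
        ψ.1.comp (FreeSemigroup.map ⇑e) = (FreeSemigroup.map ⇑e).comp φ.1) ≃
      orbitRel.Quotient (Equiv.Perm D) (CF D m) :=
  (Quot.congr (rb := fun x y : CF D m => ∃ e : Equiv.Perm D, e • x = y) (mainEquiv hm)
    (fun φ ψ => by
      constructor
      · rintro ⟨e, he⟩
        exact ⟨e, (smul_rel_iff φ ψ e).mpr ((hom_rel_iff φ ψ e).mp he)⟩
      · rintro ⟨e, he⟩
        exact ⟨e, (hom_rel_iff φ ψ e).mpr ((smul_rel_iff φ ψ e).mp he)⟩)).trans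
  (Quot.congrRight (r' := @Setoid.r _ (orbitRel (Equiv.Perm D) (CF D m))) (fun a b => by
      constructor
      · rintro ⟨e, rfl⟩
        exact (orbitRel_apply (G := Equiv.Perm D)).mpr ⟨e⁻¹, by simp⟩
      · intro hr
        obtain ⟨e, he⟩ := (orbitRel_apply (G := Equiv.Perm D)).mp hr
        exact ⟨e⁻¹, by rw [← he]; simp⟩))

/-! ### Regrouping by cycle type -/

lemma regroup {n : ℕ} (m : ℕ)
    (g : Fin (Fintype.card (Nat.Partition n)) → Equiv.Perm D)
    (hdistinct : ∀ r s, r ≠ s → fullCycleType (g r) ≠ fullCycleType (g s))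
    (hall : ∀ h : Equiv.Perm D, ∃ r, fullCycleType h = fullCycleType (g r)) :
    (∑ e : Equiv.Perm D, Psi m (fullCycleType e)) =
      ∑ r, (Nat.card {h : Equiv.Perm D // fullCycleType h = fullCycleType (g r)}) *
        Psi m (fullCycleType (g r)) := by
  have hρ_spec : ∀ e : Equiv.Perm D, fullCycleType e = fullCycleType (g (hall e).choose) :=
    fun e => (hall e).choose_spec
  rw [← Finset.sum_fiberwise_of_maps_to
      (g := fun e : Equiv.Perm D => (hall e).choose)
      (fun e _ => Finset.mem_univ _) (fun e => Psi m (fullCycleType e))]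
  apply Finset.sum_congr rfl
  intro r _
  have hfil : (Finset.univ.filter fun e : Equiv.Perm D => (hall e).choose = r) =
      (Finset.univ.filter fun e : Equiv.Perm D =>
        fullCycleType e = fullCycleType (g r)) := by
    ext e
    simp only [Finset.mem_filter, Finset.mem_univ, true_and]
    constructor
    · intro h
      rw [hρ_spec e, h]
    · intro h
      by_contra hne
      exact hdistinct _ _ hne ((hρ_spec e).symm.trans h)
  rw [hfil]
  have hcongr : ∀ e ∈ (Finset.univ.filter fun e : Equiv.Perm D =>
      fullCycleType e = fullCycleType (g r)),
      Psi m (fullCycleType e) = Psi m (fullCycleType (g r)) := fun e he => by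
    rw [(Finset.mem_filter.mp he).2]
  rw [Finset.sum_congr rfl hcongr, Finset.sum_const, smul_eq_mul,
    Nat.card_eq_fintype_card, Fintype.card_subtype]

end UE

/-- **Corollary 1.** Let `|D| = n ≥ 1`, let `p(n)` be the number of integer partitions of `n`,
and let `g_1, …, g_{p(n)} ∈ Sym(D)` have pairwise distinct cycle types, realizing all cycle
types.  Writing `C_{g_r}` for the set of permutations with the same cycle type as `g_r`, the
number of `m`-uniform endomorphisms on `D⁺` up to combinatorial equivalence is
`(1/n!) · Σ_{r=1}^{p(n)} |C_{g_r}| · ∏_{cycle lengths kᵢ of g_r}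
  (Σ_{j ∣ kᵢ} j·c(g_r,j))^m`. -/
theorem number_of_m_uniform_endomorphisms_via_partitions
    {D : Type*} [Fintype D] [DecidableEq D] {n m : ℕ} (hn : 1 ≤ n) (hm : 1 ≤ m)
    (hcard : Fintype.card D = n)
    (g : Fin (Fintype.card (Nat.Partition n)) → Equiv.Perm D)
    (hdistinct : ∀ r s, r ≠ s → fullCycleType (g r) ≠ fullCycleType (g s))
    (hall : ∀ h : Equiv.Perm D, ∃ r, fullCycleType h = fullCycleType (g r)) :
    (Nat.card (Quot (fun φ ψ : {φ : FreeSemigroup D →ₙ* FreeSemigroup D //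
          ∀ d : D, (φ (FreeSemigroup.of d)).length = m} =>
        ∃ e : Equiv.Perm D,
          (ψ : FreeSemigroup D →ₙ* FreeSemigroup D).comp (FreeSemigroup.map ⇑e)
            = (FreeSemigroup.map ⇑e).comp
                (φ : FreeSemigroup D →ₙ* FreeSemigroup D))) : ℚ)
      = (1 / (n.factorial : ℚ)) * ∑ r : Fin (Fintype.card (Nat.Partition n)),
          ((Nat.card {h : Equiv.Perm D // fullCycleType h = fullCycleType (g r)} : ℚ) *
            ((((fullCycleType (g r)).map (fun ki =>
              (∑ j ∈ ki.divisors, j * cycleCount (g r) j) ^ m)).prod : ℕ) : ℚ)) := by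
  classical
  have hm0 : 0 < m := hm
  have hL : Nat.card (Quot (fun φ ψ : {φ : FreeSemigroup D →ₙ* FreeSemigroup D //
          ∀ d : D, (φ (FreeSemigroup.of d)).length = m} =>
        ∃ e : Equiv.Perm D,
          (ψ : FreeSemigroup D →ₙ* FreeSemigroup D).comp (FreeSemigroup.map ⇑e)
            = (FreeSemigroup.map ⇑e).comp
                (φ : FreeSemigroup D →ₙ* FreeSemigroup D))) =
      Nat.card (MulAction.orbitRel.Quotient (Equiv.Perm D) (UE.CF D m)) :=
    Nat.card_congr (UE.quotEquiv hm0)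
  rw [hL]
  have hB := UE.burnside (D := D) m
  rw [hcard] at hB
  have hR := UE.regroup (D := D) m g hdistinct hall
  have hNat : Nat.card (MulAction.orbitRel.Quotient (Equiv.Perm D) (UE.CF D m)) * n.factorial =
      ∑ r : Fin (Fintype.card (Nat.Partition n)),
        Nat.card {h : Equiv.Perm D // fullCycleType h = fullCycleType (g r)} *
          ((fullCycleType (g r)).map (fun ki =>
            (∑ j ∈ ki.divisors, j * cycleCount (g r) j) ^ m)).prod := by
    rw [← hB]
    exact hR
  have hfac : (n.factorial : ℚ) ≠ 0 := Nat.cast_ne_zero.mpr (Nat.factorial_ne_zero n)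
  have hQ : (Nat.card (MulAction.orbitRel.Quotient (Equiv.Perm D) (UE.CF D m)) : ℚ) *
      (n.factorial : ℚ) =
      ∑ r : Fin (Fintype.card (Nat.Partition n)),
        ((Nat.card {h : Equiv.Perm D // fullCycleType h = fullCycleType (g r)} : ℚ) *
          ((((fullCycleType (g r)).map (fun ki =>
            (∑ j ∈ ki.divisors, j * cycleCount (g r) j) ^ m)).prod : ℕ) : ℚ)) := by
    exact_mod_cast congrArg (Nat.cast : ℕ → ℚ) hNat
  rw [← hQ]
  field_simp
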